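/- Let F = f + g with f convex differentiable on an open set D ⊆ ℝ^d, g proper convex lsc with dom g ⊆ D, and let h_y (y ∈ D) be strictly convex differentiable Bregman functions satisfying the majorization property f(x) ≤ f(y) + ⟨∇f(y), x-y⟩ + D_{h_y}(x,y) for all x ∈ D. If x⁺ minimizes x ↦ g(x) + ⟨∇f(y), x⟩ + D_{h_y}(x, y), then for every v ∈ D: F(x⁺) - F(v) ≤ D_{h_y}(v, y) - D_{h_y}(v, x⁺) - D_f(v, y). -/

import Mathlib

open scoped RealInnerProductSpace

/-- VBMM descent lemma: if `x⁺` minimizes the Bregman proximal subproblem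
`x ↦ g(x) + ⟪∇f(y), x⟫ + D_{h_y}(x,y)` at `y ∈ D`, then for every `v ∈ D`,
`F(x⁺) - F(v) ≤ D_{h_y}(v,y) - D_{h_y}(v,x⁺) - D_f(v,y)` (stated additively in
`EReal` since `g` may take the value `+∞`). -/
theorem vbmm_descent_lemma (d : ℕ)
    (D : Set (EuclideanSpace ℝ (Fin d))) (hD : IsOpen D)
    (f : EuclideanSpace ℝ (Fin d) → ℝ)
    (hf_diff : ∀ x ∈ D, DifferentiableAt ℝ f x)
    (hf_conv : ConvexOn ℝ D f)
    (g : EuclideanSpace ℝ (Fin d) → EReal)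
    (hg_nebot : ∀ x, g x ≠ ⊥)
    (hg_proper : ∃ x, g x ≠ ⊤)
    (hg_conv : ∀ x y : EuclideanSpace ℝ (Fin d), ∀ a b : ℝ,
      0 ≤ a → 0 ≤ b → a + b = 1 →
      g (a • x + b • y) ≤ (a : EReal) * g x + (b : EReal) * g y)
    (hg_lsc : LowerSemicontinuous g)
    (hg_dom : {x | g x ≠ ⊤} ⊆ D)
    (y : EuclideanSpace ℝ (Fin d)) (hy : y ∈ D)
    (h : EuclideanSpace ℝ (Fin d) → ℝ)
    (hh_diff : Differentiable ℝ h)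
    (hh_sconv : StrictConvexOn ℝ Set.univ h)
    (hmaj : ∀ x ∈ D,
      f x ≤ f y + ⟪gradient f y, x - y⟫
        + (h x - h y - ⟪gradient h y, x - y⟫))
    (xp : EuclideanSpace ℝ (Fin d))
    (hmin : ∀ u : EuclideanSpace ℝ (Fin d),
      g xp + ((⟪gradient f y, xp⟫
          + (h xp - h y - ⟪gradient h y, xp - y⟫) : ℝ) : EReal)
        ≤ g u + ((⟪gradient f y, u⟫
          + (h u - h y - ⟪gradient h y, u - y⟫) : ℝ) : EReal))
    (v : EuclideanSpace ℝ (Fin d)) (hv : v ∈ D) :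
    ((f xp : ℝ) : EReal) + g xp
        + ((h v - h xp - ⟪gradient h xp, v - xp⟫ : ℝ) : EReal)
        + ((f v - f y - ⟪gradient f y, v - y⟫ : ℝ) : EReal)
      ≤ ((f v : ℝ) : EReal) + g v
        + ((h v - h y - ⟪gradient h y, v - y⟫ : ℝ) : EReal) := by
  set a := gradient f y with ha
  set b := gradient h y with hb
  set c := gradient h xp with hc
  -- g xp is finite
  obtain ⟨u0, hu0⟩ := hg_proper
  have hgxp_ne_top : g xp ≠ ⊤ := by
    intro htop
    have hl := hmin u0
    rw [htop, EReal.top_add_of_ne_bot (EReal.coe_ne_bot _)] at hl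
    exact absurd (top_le_iff.mp hl) (EReal.add_lt_top hu0 (EReal.coe_ne_top _)).ne
  have hxpD : xp ∈ D := hg_dom hgxp_ne_top
  obtain ⟨gx, hgx⟩ : ∃ r : ℝ, g xp = (r : EReal) := by
    lift g xp to ℝ using ⟨hgxp_ne_top, hg_nebot xp⟩ with r hr
    exact ⟨r, rfl⟩
  -- case g v = ⊤
  rcases eq_or_ne (g v) ⊤ with hgv_top | hgv_ne_top
  · rw [hgv_top]
    rw [EReal.add_top_of_ne_bot (EReal.coe_ne_bot _), EReal.top_add_of_ne_bot (EReal.coe_ne_bot _)]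
    exact le_top
  obtain ⟨gv, hgv⟩ : ∃ r : ℝ, g v = (r : EReal) := by
    lift g v to ℝ using ⟨hgv_ne_top, hg_nebot v⟩ with r hr
    exact ⟨r, rfl⟩
  -- inner product via fderiv
  have hgrad_inner : ∀ u, ⟪c, u⟫ = fderiv ℝ h xp u := by
    intro u; simp [hc, gradient, InnerProductSpace.toDual_symm_apply]
  -- φ and q
  set w := v - xp with hw
  set φ : EuclideanSpace ℝ (Fin d) → ℝ :=
    fun u => ⟪a, u⟫ + (h u - h y - ⟪b, u - y⟫) with hφ
  set q : ℝ → ℝ := fun t => φ (xp + t • w) with hq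
  have hq0 : q 0 = φ xp := by simp [hq]
  -- slope inequality
  have hslope : ∀ t ∈ Set.Ioo (0:ℝ) 1, gx - gv ≤ (q t - q 0) / t := by
    intro t ht
    obtain ⟨ht0, ht1⟩ := ht
    have hcomb : xp + t • w = t • v + (1 - t) • xp := by
      rw [hw]; module
    have hgc := hg_conv v xp t (1 - t) ht0.le (by linarith) (by ring)
    rw [← hcomb, hgx, hgv] at hgc
    have hgc' : g (xp + t • w) ≤ ((t * gv + (1 - t) * gx : ℝ) : EReal) := by
      calc g (xp + t • w) ≤ (t : EReal) * (gv : EReal) + ((1 - t : ℝ) : EReal) * (gx : EReal) := hgc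
        _ = ((t * gv + (1 - t) * gx : ℝ) : EReal) := by norm_cast
    have hm := hmin (xp + t • w)
    rw [hgx] at hm
    have hm2 : ((gx + φ xp : ℝ) : EReal)
        ≤ ((t * gv + (1 - t) * gx + q t : ℝ) : EReal) := by
      calc ((gx + φ xp : ℝ) : EReal)
          = (gx : EReal) + ((φ xp : ℝ) : EReal) := by rw [EReal.coe_add]
        _ ≤ g (xp + t • w) + ((q t : ℝ) : EReal) := hm
        _ ≤ ((t * gv + (1 - t) * gx : ℝ) : EReal) + ((q t : ℝ) : EReal) :=
            add_le_add_left hgc' _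
        _ = ((t * gv + (1 - t) * gx + q t : ℝ) : EReal) := by norm_cast
    have hm3 : gx + φ xp ≤ t * gv + (1 - t) * gx + q t := EReal.coe_le_coe_iff.mp hm2
    rw [hq0]
    rw [le_div_iff₀ ht0]
    nlinarith [hm3]
  -- derivative of q at 0
  have hc_deriv : HasDerivAt (fun t : ℝ => xp + t • w) w 0 := by
    simpa using ((hasDerivAt_id (0:ℝ)).smul_const w).const_add xp
  have hh_d : HasDerivAt (fun t : ℝ => h (xp + t • w)) (fderiv ℝ h xp w) 0 := by
    have h0 : xp + (0:ℝ) • w = xp := by simp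
    have hfd : HasFDerivAt h (fderiv ℝ h xp) (xp + (0:ℝ) • w) := by
      rw [h0]; exact (hh_diff xp).hasFDerivAt
    exact hfd.comp_hasDerivAt 0 hc_deriv
  have ha_d : HasDerivAt (fun t : ℝ => ⟪a, xp + t • w⟫) ⟪a, w⟫ 0 := by
    have heq : (fun t : ℝ => ⟪a, xp + t • w⟫) = fun t => ⟪a, xp⟫ + t * ⟪a, w⟫ := by
      funext t; rw [inner_add_right, real_inner_smul_right]
    rw [heq]
    simpa using ((hasDerivAt_id (0:ℝ)).mul_const ⟪a, w⟫).const_add ⟪a, xp⟫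
  have hb_d : HasDerivAt (fun t : ℝ => ⟪b, xp + t • w - y⟫) ⟪b, w⟫ 0 := by
    have heq : (fun t : ℝ => ⟪b, xp + t • w - y⟫) = fun t => ⟪b, xp - y⟫ + t * ⟪b, w⟫ := by
      funext t
      have : xp + t • w - y = (xp - y) + t • w := by module
      rw [this, inner_add_right, real_inner_smul_right]
    rw [heq]
    simpa using ((hasDerivAt_id (0:ℝ)).mul_const ⟪b, w⟫).const_add ⟪b, xp - y⟫
  have hqd : HasDerivAt q (⟪a, w⟫ + (fderiv ℝ h xp w - ⟪b, w⟫)) 0 := by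
    exact ha_d.add ((hh_d.sub_const (h y)).sub hb_d)
  -- limit argument
  have hgrad_ineq : gx - gv ≤ ⟪a, w⟫ + (⟪c, w⟫ - ⟪b, w⟫) := by
    rw [hgrad_inner]
    have htend := hasDerivAt_iff_tendsto_slope.mp hqd
    have htend' : Filter.Tendsto (slope q 0) (nhdsWithin 0 (Set.Ioi 0))
        (nhds (⟪a, w⟫ + (fderiv ℝ h xp w - ⟪b, w⟫))) :=
      htend.mono_left (nhdsWithin_mono _ (fun t ht => Set.mem_compl_singleton_iff.mpr (ne_of_gt ht)))
    refine ge_of_tendsto htend' ?_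
    filter_upwards [Ioo_mem_nhdsGT_of_mem (by norm_num : (0:ℝ) ∈ Set.Ico 0 1)] with t ht
    simpa only [slope_def_field, sub_zero] using hslope t ht
  -- majorization at xp
  have hmaj' := hmaj xp hxpD
  -- finish
  rw [hgx, hgv]
  norm_cast
  have hinner_a : ⟪a, v - y⟫ = ⟪a, w⟫ + ⟪a, xp - y⟫ := by
    rw [hw, ← inner_add_right]; congr 1; module
  have hinner_b : ⟪b, v - y⟫ = ⟪b, w⟫ + ⟪b, xp - y⟫ := by
    rw [hw, ← inner_add_right]; congr 1; module
  linarith [hmaj', hgrad_ineq, hinner_a, hinner_b]
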